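/- Every IPC-component is extendible: if B = ⋀Γ ∧ ⋀Δ where Γ consists of atoms and Δ consists of implications C → D with atomic antecedent C such that IPC ⊬ ⋀Γ → C, then for every finite class 𝒦 of finite rooted Kripke models of B, there is a variant of the disjoint sum Σ(𝒦) with fresh root (changing only the root valuation) which is a model of B. -/

import Mathlib

inductive Fm : Type
  | bot : Fm
  | atom : ℕ → Fm
  | and : Fm → Fm → Fm
  | or : Fm → Fm → Fm
  | imp : Fm → Fm → Fm
deriving DecidableEq

namespace Fm

def neg (A : Fm) : Fm := A.imp .bot
def top : Fm := Fm.bot.imp .bot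
def iff (A B : Fm) : Fm := (A.imp B).and (B.imp A)

def subst (θ : ℕ → Fm) : Fm → Fm
  | bot => bot
  | atom n => θ n
  | and A B => (A.subst θ).and (B.subst θ)
  | or A B => (A.subst θ).or (B.subst θ)
  | imp A B => (A.subst θ).imp (B.subst θ)

def atoms : Fm → Finset ℕ
  | bot => ∅
  | atom n => {n}
  | and A B => A.atoms ∪ B.atoms
  | or A B => A.atoms ∪ B.atoms
  | imp A B => A.atoms ∪ B.atoms

/-- maximal nesting of implications in the left/overall: `c→`. -/
def cimp : Fm → ℕ
  | bot => 0
  | atom _ => 0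
  | and A B => max A.cimp B.cimp
  | or A B => max A.cimp B.cimp
  | imp A B => 1 + max A.cimp B.cimp

end Fm

def bigAndL (l : List Fm) : Fm := l.foldr Fm.and Fm.top
def bigOrL (l : List Fm) : Fm := l.foldr Fm.or Fm.bot

/-- nonempty disjunction -/
def bigOrNE : Fm → List Fm → Fm
  | A, [] => A
  | A, B :: l => A.or (bigOrNE B l)

/-- Hilbert-style intuitionistic propositional calculus. -/
inductive IPC : Fm → Prop
  | imp_k (A B : Fm) : IPC (A.imp (B.imp A))
  | imp_s (A B C : Fm) : IPC ((A.imp (B.imp C)).imp ((A.imp B).imp (A.imp C)))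
  | and_intro (A B : Fm) : IPC (A.imp (B.imp (A.and B)))
  | and_left (A B : Fm) : IPC ((A.and B).imp A)
  | and_right (A B : Fm) : IPC ((A.and B).imp B)
  | or_inl (A B : Fm) : IPC (A.imp (A.or B))
  | or_inr (A B : Fm) : IPC (B.imp (A.or B))
  | or_elim (A B C : Fm) : IPC ((A.imp C).imp ((B.imp C).imp ((A.or B).imp C)))
  | exfalso (A : Fm) : IPC (Fm.bot.imp A)
  | mp {A B : Fm} : IPC (A.imp B) → IPC A → IPC B

/-- Γ-preservativity in the logic T : `A ⊳_{T,Γ} B`. -/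
def Pres (T : Fm → Prop) (Γ : Set Fm) (A B : Fm) : Prop :=
  ∀ E ∈ Γ, T (E.imp A) → T (E.imp B)

/-- substitutions are identity on the parameters. -/
def IdOnPar (par : Finset ℕ) (θ : ℕ → Fm) : Prop :=
  ∀ p ∈ par, θ p = Fm.atom p

/-- implication-free formulas. -/
inductive NI : Fm → Prop
  | bot : NI .bot
  | atom (n : ℕ) : NI (.atom n)
  | and {A B : Fm} : NI A → NI B → NI (A.and B)
  | or {A B : Fm} : NI A → NI B → NI (A.or B)

/-- No Nested Implications in the Left. -/
inductive NNIL : Fm → Prop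
  | bot : NNIL .bot
  | atom (n : ℕ) : NNIL (.atom n)
  | and {A B : Fm} : NNIL A → NNIL B → NNIL (A.and B)
  | or {A B : Fm} : NNIL A → NNIL B → NNIL (A.or B)
  | imp {A B : Fm} : NI A → NNIL B → NNIL (A.imp B)

def IPCPrime (A : Fm) : Prop :=
  ∀ B C, IPC (A.imp (B.or C)) → IPC (A.imp B) ∨ IPC (A.imp C)

/-- T-components: `⋀Γ ∧ ⋀Δ`, Γ atoms, Δ implications with atomic
antecedents not T-provable from Γ. -/
def IsComponentOver (T : Fm → Prop) (B : Fm) : Prop :=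
  ∃ (as : List ℕ) (imps : List (ℕ × Fm)),
    B = (bigAndL (as.map Fm.atom)).and
          (bigAndL (imps.map fun p => (Fm.atom p.1).imp p.2)) ∧
    ∀ p ∈ imps, ¬ T ((bigAndL (as.map Fm.atom)).imp (Fm.atom p.1))

structure KModel : Type 1 where
  W : Type
  le : W → W → Prop
  val : W → ℕ → Prop

namespace KModel

def force (K : KModel) : Fm → K.W → Prop
  | .bot, _ => False
  | .atom n, w => K.val w n
  | .and A B, w => K.force A w ∧ K.force B w
  | .or A B, w => K.force A w ∨ K.force B w
  | .imp A B, w => ∀ u, K.le w u → K.force A u → K.force B u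

def IsIPC (K : KModel) : Prop :=
  (∀ w, K.le w w) ∧ (∀ {w u v}, K.le w u → K.le u v → K.le w v) ∧
  (∀ {w u}, K.le w u → K.le u w → w = u) ∧
  (∀ {w u} (a : ℕ), K.le w u → K.val w a → K.val u a)

def Rooted (K : KModel) : Prop := ∃ r, ∀ w, K.le r w

def Tree (K : KModel) : Prop :=
  ∀ w, {u | K.le u w}.Finite ∧
    ∀ u v, K.le u w → K.le v w → K.le u v ∨ K.le v u

/-- finite rooted tree intuitionistic Kripke model. -/
def IsFRT (K : KModel) : Prop := K.IsIPC ∧ Finite K.W ∧ K.Rooted ∧ K.Tree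

end KModel

/-- θ(K): same frame, valuation given by forcing of θ(a). -/
def substModel (θ : ℕ → Fm) (K : KModel) : KModel :=
  ⟨K.W, K.le, fun w a => K.force (θ a) w⟩

/-- disjoint sum of a family of models with a fresh root `none`,
whose valuation at the root is `V0`. -/
def sumModel {ι : Type} (M : ι → KModel) (V0 : ℕ → Prop) : KModel where
  W := Option (Σ i, (M i).W)
  le := fun x y =>
    x = none ∨ ∃ i w u, x = some ⟨i, w⟩ ∧ y = some ⟨i, u⟩ ∧ (M i).le w u
  val := fun x a => match x with
    | none => V0 a
    | some ⟨i, w⟩ => (M i).val w a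

/-- A is extendible: any finite family of (finite rooted tree) models of A
can be summed with a fresh root whose valuation (monotonely chosen)
can be arranged so that the sum is again a model of A. -/
def Extendible (A : Fm) : Prop :=
  ∀ (ι : Type), Finite ι → ∀ (M : ι → KModel),
    (∀ i, (M i).IsFRT ∧ ∀ w, (M i).force A w) →
    ∃ V0 : ℕ → Prop, (∀ a, V0 a → ∀ i w, (M i).val w a) ∧
      ∀ w, (sumModel M V0).force A w

-- auxiliary lemmas
lemma IPC_comp {A B C : Fm} (hAB : IPC (A.imp B)) (hBC : IPC (B.imp C)) :
    IPC (A.imp C) := by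
  have h1 : IPC (A.imp (B.imp C)) := IPC.mp (IPC.imp_k _ _) hBC
  exact IPC.mp (IPC.mp (IPC.imp_s A B C) h1) hAB

lemma IPC_bigAnd_mem {l : List Fm} {x : Fm} (hx : x ∈ l) :
    IPC ((bigAndL l).imp x) := by
  induction l with
  | nil => cases hx
  | cons y t ih =>
    rcases List.mem_cons.mp hx with rfl | hx'
    · exact IPC.and_left _ _
    · exact IPC_comp (IPC.and_right _ _) (ih hx')

lemma sum_force_some {ι : Type} (M : ι → KModel) (V0 : ℕ → Prop)
    (A : Fm) (i : ι) (w : (M i).W) :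
    (sumModel M V0).force A (some ⟨i, w⟩) ↔ (M i).force A w := by
  induction A generalizing w with
  | bot => simp [KModel.force]
  | atom n => simp [KModel.force, sumModel]
  | and A B ihA ihB => simp [KModel.force, ihA, ihB]
  | or A B ihA ihB => simp [KModel.force, ihA, ihB]
  | imp A B ihA ihB =>
    constructor
    · intro H u hle hA
      have : (sumModel M V0).le (some ⟨i, w⟩) (some ⟨i, u⟩) := by
        exact Or.inr ⟨i, w, u, rfl, rfl, hle⟩
      exact (ihB u).mp (H _ this ((ihA u).mpr hA))
    · intro H u hle hA
      rcases hle with h0 | ⟨j, v, v', hv, hv', hle'⟩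
      · cases h0
      · cases hv
        cases hv'
        exact (ihB _).mpr (H _ hle' ((ihA _).mp hA))

lemma force_bigAndL (K : KModel) (l : List Fm) (w : K.W) :
    K.force (bigAndL l) w ↔ ∀ x ∈ l, K.force x w := by
  induction l with
  | nil => simp [bigAndL, Fm.top, KModel.force]
  | cons y t ih => simp [bigAndL, KModel.force]; intro _; exact ih

theorem stmt_14 (as : List ℕ) (imps : List (ℕ × Fm))
    (h : ∀ p ∈ imps, ¬ IPC ((bigAndL (as.map Fm.atom)).imp (Fm.atom p.1))) :
    Extendible ((bigAndL (as.map Fm.atom)).and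
      (bigAndL (imps.map fun p => (Fm.atom p.1).imp p.2))) := by
  intro ι _ M hM
  refine ⟨fun a => a ∈ as, ?_, ?_⟩
  · intro a ha i w
    have hf := (hM i).2 w
    have h1 : (M i).force (bigAndL (as.map Fm.atom)) w := hf.1
    have := (force_bigAndL _ _ _).mp h1 (Fm.atom a) (List.mem_map_of_mem ha)
    exact this
  · intro w
    match w with
    | some ⟨i, v⟩ =>
      exact (sum_force_some M _ _ i v).mpr ((hM i).2 v)
    | none =>
      constructor
      · refine (force_bigAndL _ _ _).mpr ?_
        intro x hx
        rcases List.mem_map.mp hx with ⟨a, ha, rfl⟩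
        exact ha
      · refine (force_bigAndL _ _ _).mpr ?_
        intro x hx
        rcases List.mem_map.mp hx with ⟨p, hp, rfl⟩
        intro u hle hA
        match u with
        | none =>
          exfalso
          have : (p.1 : ℕ) ∈ as := hA
          exact h p hp (IPC_bigAnd_mem (List.mem_map_of_mem this))
        | some ⟨i, v⟩ =>
          have hf := (hM i).2 v
          have h2 : (M i).force ((Fm.atom p.1).imp p.2) v :=
            (force_bigAndL _ _ _).mp hf.2 _ (List.mem_map_of_mem hp)
          have hrefl : (M i).le v v := (hM i).1.1.1 v
          exact (sum_force_some M _ _ i v).mpr (h2 v hrefl hA)
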